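/- arXiv:0710.1281 — 5 statements merged into one kernel-verified Lean document; each statement's English description precedes it below -/
import Mathlib

section
/- For a K-sparse set E in the complex plane (any two distinct points of E are at distance at least K) and any point z ∈ ℂ, letting s denote a point of E closest to z, one has ∑_{m ∈ E, m ≠ s} 1/|z−m|³ ≤ 200·K⁻³. -/
/-- A set `E ⊆ ℂ` is `K`-sparse if any two distinct points of `E` are at
distance at least `K`. -/
def KSparse (K : ℝ) (E : Set ℂ) : Prop :=
  ∀ m ∈ E, ∀ m' ∈ E, m ≠ m' → K ≤ ‖m - m'‖

open Finset Metric MeasureTheory ENNReal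

/-- Packing lemma: a `K`-separated finite set in the annulus
`j*K/2 ≤ |z - m| < (j+1)*K/2` (with `j ≥ 1`) has at most `9 j` elements. -/
lemma packing_lemma (K : ℝ) (hK : 0 < K) (z : ℂ) (j : ℕ) (hj : 1 ≤ j)
    (G : Finset ℂ) (hsep : ∀ m ∈ G, ∀ m' ∈ G, m ≠ m' → K ≤ ‖m - m'‖)
    (hlo : ∀ m ∈ G, (j : ℝ) * (K / 2) ≤ ‖z - m‖)
    (hhi : ∀ m ∈ G, ‖z - m‖ < ((j : ℝ) + 1) * (K / 2)) :
    (G.card : ℝ) ≤ 9 * j := by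
  have hj' : (1 : ℝ) ≤ (j : ℝ) := by exact_mod_cast hj
  have hK2 : (0 : ℝ) < K / 2 := by linarith
  -- distances as `dist`
  have hdist : ∀ m m' : ℂ, ‖m - m'‖ = dist m m' := by
    intro m m'; rw [Complex.dist_eq]
  -- the balls of radius K/2 around points of G are pairwise disjoint
  have hpd : (G : Set ℂ).PairwiseDisjoint (fun m => ball m (K / 2)) := by
    intro m hm m' hm' hne
    apply ball_disjoint_ball
    have := hsep m (by simpa using hm) m' (by simpa using hm') hne
    rw [hdist] at this; linarith
  have hmeas : volume (⋃ m ∈ G, ball m (K / 2)) =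
      (G.card : ℝ≥0∞) * (ENNReal.ofReal (K / 2) ^ 2 * NNReal.pi) := by
    rw [measure_biUnion_finset hpd (fun m _ => measurableSet_ball)]
    simp [Complex.volume_ball, Finset.sum_const, nsmul_eq_mul]
  -- the union together with the small ball around z is inside the big ball
  set A := (⋃ m ∈ G, ball m (K / 2)) with hA
  set S := ball z (((j : ℝ) - 1) * (K / 2)) with hS
  set B := ball z (((j : ℝ) + 2) * (K / 2)) with hB
  have hsub : A ∪ S ⊆ B := by
    rintro x (hx | hx)
    · rw [hA] at hx
      simp only [Set.mem_iUnion] at hx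
      obtain ⟨m, hm, hxm⟩ := hx
      rw [mem_ball] at hxm ⊢
      have h1 := hhi m hm
      rw [hdist, dist_comm] at h1
      calc dist x z ≤ dist x m + dist m z := dist_triangle _ _ _
        _ < K / 2 + ((j : ℝ) + 1) * (K / 2) := by linarith
        _ = ((j : ℝ) + 2) * (K / 2) := by ring
    · rw [hS, mem_ball] at hx
      rw [mem_ball]
      nlinarith
  have hdisjAS : Disjoint A S := by
    rw [hA, Set.disjoint_iUnion_left]
    intro m
    rw [Set.disjoint_iUnion_left]
    intro hm
    rw [hS]
    apply ball_disjoint_ball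
    have := hlo m hm
    rw [hdist, dist_comm] at this
    linarith
  have hAS : volume (A ∪ S) = volume A + volume S :=
    measure_union hdisjAS measurableSet_ball
  have hle : volume A + volume S ≤ volume B := by
    rw [← hAS]; exact measure_mono hsub
  rw [hmeas] at hle
  have hSvol : volume S = ENNReal.ofReal (((j : ℝ) - 1) * (K / 2)) ^ 2 * NNReal.pi :=
    Complex.volume_ball _ _
  have hBvol : volume B = ENNReal.ofReal (((j : ℝ) + 2) * (K / 2)) ^ 2 * NNReal.pi :=
    Complex.volume_ball _ _
  rw [hSvol, hBvol] at hle
  -- convert powers of ofReal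
  have hofpow : ∀ r : ℝ, 0 ≤ r → ENNReal.ofReal r ^ 2 = ENNReal.ofReal (r ^ 2) := by
    intro r hr; rw [ENNReal.ofReal_pow hr]
  rw [hofpow _ (le_of_lt hK2), hofpow _ (by nlinarith), hofpow _ (by nlinarith)] at hle
  -- key real inequality
  have hreal : (((j : ℝ) + 2) * (K / 2)) ^ 2 ≤
      (9 * (j : ℝ)) * (K / 2) ^ 2 + (((j : ℝ) - 1) * (K / 2)) ^ 2 := by nlinarith
  have hB' : ENNReal.ofReal ((((j : ℝ) + 2) * (K / 2)) ^ 2) ≤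
      ENNReal.ofReal (9 * (j : ℝ)) * ENNReal.ofReal ((K / 2) ^ 2)
        + ENNReal.ofReal ((((j : ℝ) - 1) * (K / 2)) ^ 2) := by
    rw [← ENNReal.ofReal_mul (by positivity), ← ENNReal.ofReal_add (by positivity) (by positivity)]
    exact ENNReal.ofReal_le_ofReal hreal
  have hle2 : ((G.card : ℝ≥0∞) * ENNReal.ofReal ((K / 2) ^ 2)
        + ENNReal.ofReal ((((j : ℝ) - 1) * (K / 2)) ^ 2)) * NNReal.pi ≤
      (ENNReal.ofReal (9 * (j : ℝ)) * ENNReal.ofReal ((K / 2) ^ 2)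
        + ENNReal.ofReal ((((j : ℝ) - 1) * (K / 2)) ^ 2)) * NNReal.pi := by
    calc ((G.card : ℝ≥0∞) * ENNReal.ofReal ((K / 2) ^ 2)
          + ENNReal.ofReal ((((j : ℝ) - 1) * (K / 2)) ^ 2)) * NNReal.pi
        = (G.card : ℝ≥0∞) * (ENNReal.ofReal ((K / 2) ^ 2) * NNReal.pi)
          + ENNReal.ofReal ((((j : ℝ) - 1) * (K / 2)) ^ 2) * NNReal.pi := by ring
      _ ≤ ENNReal.ofReal ((((j : ℝ) + 2) * (K / 2)) ^ 2) * NNReal.pi := hle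
      _ ≤ (ENNReal.ofReal (9 * (j : ℝ)) * ENNReal.ofReal ((K / 2) ^ 2)
            + ENNReal.ofReal ((((j : ℝ) - 1) * (K / 2)) ^ 2)) * NNReal.pi :=
          mul_le_mul_left hB' _
  have hpine : (NNReal.pi : ℝ≥0∞) ≠ 0 := by
    rw [ne_eq, ENNReal.coe_eq_zero, ← NNReal.coe_eq_zero, NNReal.coe_real_pi]
    exact Real.pi_ne_zero
  have hpitop : (NNReal.pi : ℝ≥0∞) ≠ ⊤ := ENNReal.coe_ne_top
  have hle3 := (ENNReal.mul_le_mul_iff_left hpine hpitop).1 hle2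
  have hle4 := (ENNReal.add_le_add_iff_right ENNReal.ofReal_ne_top).1 hle3
  have hc0 : ENNReal.ofReal ((K / 2) ^ 2) ≠ 0 := by
    simp only [ne_eq, ENNReal.ofReal_eq_zero, not_le]; positivity
  have hle5 := (ENNReal.mul_le_mul_iff_left hc0 ENNReal.ofReal_ne_top).1 hle4
  have := ENNReal.toReal_mono ENNReal.ofReal_ne_top hle5
  simp only [ENNReal.toReal_natCast, ENNReal.toReal_ofReal (by positivity : (0:ℝ) ≤ 9 * (j:ℝ))]
    at this
  exact this

/-- Sum of `1/j²` over a finite set of positive naturals is at most 2. -/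
lemma sum_inv_sq_le (T : Finset ℕ) (hT : ∀ j ∈ T, 1 ≤ j) :
    ∑ j ∈ T, (1 : ℝ) / (j : ℝ) ^ 2 ≤ 2 := by
  set N := T.sup id with hN
  have hsub : T ⊆ Finset.Ico 1 (N + 1) := by
    intro j hj
    rw [Finset.mem_Ico]
    exact ⟨hT j hj, Nat.lt_succ_of_le (Finset.le_sup (f := id) hj)⟩
  have h1 : ∑ j ∈ T, (1 : ℝ) / (j : ℝ) ^ 2 ≤
      ∑ j ∈ Finset.Ico 1 (N + 1), (1 : ℝ) / (j : ℝ) ^ 2 := by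
    apply Finset.sum_le_sum_of_subset_of_nonneg hsub
    intro j _ _; positivity
  have h2 : ∀ j ∈ Finset.Ico 1 (N + 1), (1 : ℝ) / (j : ℝ) ^ 2 ≤
      2 / (j : ℝ) - 2 / ((j : ℝ) + 1) := by
    intro j hj
    have hj1 : 1 ≤ j := (Finset.mem_Ico.1 hj).1
    have hj' : (1 : ℝ) ≤ (j : ℝ) := by exact_mod_cast hj1
    have h0 : (0 : ℝ) < (j : ℝ) := by linarith
    rw [div_sub_div _ _ (ne_of_gt h0) (by positivity), div_le_div_iff₀ (by positivity) (by positivity)]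
    nlinarith
  have h3 : ∑ j ∈ Finset.Ico 1 (N + 1), ((2 : ℝ) / (j : ℝ) - 2 / ((j : ℝ) + 1)) =
      2 / 1 - 2 / ((N : ℝ) + 1) := by
    rw [Finset.sum_Ico_eq_sum_range]
    simp only [Nat.add_sub_cancel]
    have := Finset.sum_range_sub' (fun i => (2 : ℝ) / ((i : ℝ) + 1)) N
    simp only [Nat.cast_zero, zero_add] at this
    rw [← this]
    apply Finset.sum_congr rfl
    intro i _
    push_cast
    ring_nf
  calc ∑ j ∈ T, (1 : ℝ) / (j : ℝ) ^ 2
      ≤ ∑ j ∈ Finset.Ico 1 (N + 1), (1 : ℝ) / (j : ℝ) ^ 2 := h1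
    _ ≤ ∑ j ∈ Finset.Ico 1 (N + 1), ((2 : ℝ) / (j : ℝ) - 2 / ((j : ℝ) + 1)) :=
        Finset.sum_le_sum h2
    _ = 2 / 1 - 2 / ((N : ℝ) + 1) := h3
    _ ≤ 2 := by
        have : (0 : ℝ) < (N : ℝ) + 1 := by positivity
        have : (0 : ℝ) ≤ 2 / ((N : ℝ) + 1) := by positivity
        linarith

lemma finsum_bound (K : ℝ) (hK : 0 < K) (E : Set ℂ)
    (hE : KSparse K E) (z : ℂ) (s : ℂ) (hs : s ∈ E)
    (hclosest : ∀ m ∈ E, ‖z - s‖ ≤ ‖z - m‖)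
    (F : Finset ℂ) (hF : ↑F ⊆ E \ {s}) :
    ∑ m ∈ F, 1 / ‖z - m‖ ^ 3 ≤ 144 / K ^ 3 := by
  classical
  -- every point of E \ {s} has distance at least K/2 from z
  have hfar : ∀ m ∈ F, K / 2 ≤ ‖z - m‖ := by
    intro m hm
    obtain ⟨hmE, hms⟩ := hF hm
    have h1 : K ≤ ‖m - s‖ := hE m hmE s hs (by simpa using hms)
    have h2 : ‖m - s‖ ≤ ‖m - z‖ + ‖z - s‖ := by
      have := norm_add_le (m - z) (z - s)
      simpa using this
    have h3 : ‖m - z‖ = ‖z - m‖ := norm_sub_rev m z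
    have h4 := hclosest m hmE
    linarith
  set jf : ℂ → ℕ := fun m => ⌊2 * ‖z - m‖ / K⌋₊ with hjf
  have hjfub : ∀ m ∈ F, (jf m : ℝ) * (K / 2) ≤ ‖z - m‖ := by
    intro m hm
    have := Nat.floor_le (by positivity : (0:ℝ) ≤ 2 * ‖z - m‖ / K)
    rw [hjf]
    calc (⌊2 * ‖z - m‖ / K⌋₊ : ℝ) * (K / 2)
        ≤ (2 * ‖z - m‖ / K) * (K / 2) := by
          apply mul_le_mul_of_nonneg_right this (by positivity)
      _ = ‖z - m‖ := by field_simp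
  have hjflb : ∀ m ∈ F, ‖z - m‖ < ((jf m : ℝ) + 1) * (K / 2) := by
    intro m hm
    have h0 := Nat.lt_floor_add_one (2 * ‖z - m‖ / K)
    rw [div_lt_iff₀ hK] at h0
    rw [hjf]
    nlinarith
  have hjfpos : ∀ m ∈ F, 1 ≤ jf m := by
    intro m hm
    rw [hjf]
    rw [Nat.le_floor_iff (by positivity)]
    have := hfar m hm
    rw [le_div_iff₀ hK]
    push_cast
    linarith
  -- group the sum by the value of jf
  have hmaps : ∀ m ∈ F, jf m ∈ F.image jf := fun m hm => Finset.mem_image_of_mem jf hm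
  rw [← Finset.sum_fiberwise_of_maps_to hmaps (fun m => 1 / ‖z - m‖ ^ 3)]
  -- bound each fiber
  have hfiber : ∀ j ∈ F.image jf,
      ∑ m ∈ F.filter (fun m => jf m = j), 1 / ‖z - m‖ ^ 3 ≤
        (72 / K ^ 3) * (1 / (j : ℝ) ^ 2) := by
    intro j hjim
    obtain ⟨m₀, hm₀F, hm₀⟩ := Finset.mem_image.1 hjim
    have hj1 : 1 ≤ j := hm₀ ▸ hjfpos m₀ hm₀F
    have hj' : (1 : ℝ) ≤ (j : ℝ) := by exact_mod_cast hj1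
    set G := F.filter (fun m => jf m = j) with hG
    -- each term is at most 8 / (j³ K³)
    have hterm : ∀ m ∈ G, 1 / ‖z - m‖ ^ 3 ≤ 8 / ((j : ℝ) ^ 3 * K ^ 3) := by
      intro m hm
      rw [hG, Finset.mem_filter] at hm
      obtain ⟨hmF, hmj⟩ := hm
      have hlo := hjfub m hmF
      rw [hmj] at hlo
      have hr0 : (0 : ℝ) < ‖z - m‖ := lt_of_lt_of_le (by positivity) hlo
      have hcube : ((j : ℝ) * (K / 2)) ^ 3 ≤ ‖z - m‖ ^ 3 :=
        pow_le_pow_left₀ (by positivity) hlo 3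
      rw [div_le_div_iff₀ (by positivity) (by positivity)]
      nlinarith [pow_pos hr0 3]
    -- the fiber has at most 9 j elements
    have hcard : (G.card : ℝ) ≤ 9 * j := by
      apply packing_lemma K hK z j hj1 G
      · intro m hm m' hm' hne
        rw [hG, Finset.mem_filter] at hm hm'
        exact hE m (hF hm.1).1 m' (hF hm'.1).1 hne
      · intro m hm
        rw [hG, Finset.mem_filter] at hm
        have := hjfub m hm.1
        rw [hm.2] at this; exact this
      · intro m hm
        rw [hG, Finset.mem_filter] at hm
        have := hjflb m hm.1
        rw [hm.2] at this; exact this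
    calc ∑ m ∈ G, 1 / ‖z - m‖ ^ 3
        ≤ ∑ m ∈ G, 8 / ((j : ℝ) ^ 3 * K ^ 3) := Finset.sum_le_sum hterm
      _ = (G.card : ℝ) * (8 / ((j : ℝ) ^ 3 * K ^ 3)) := by
          rw [Finset.sum_const, nsmul_eq_mul]
      _ ≤ (9 * (j : ℝ)) * (8 / ((j : ℝ) ^ 3 * K ^ 3)) := by
          apply mul_le_mul_of_nonneg_right hcard (by positivity)
      _ = (72 / K ^ 3) * (1 / (j : ℝ) ^ 2) := by
          field_simp
          ring
  calc ∑ j ∈ F.image jf, ∑ m ∈ F.filter (fun m => jf m = j), 1 / ‖z - m‖ ^ 3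
      ≤ ∑ j ∈ F.image jf, (72 / K ^ 3) * (1 / (j : ℝ) ^ 2) := Finset.sum_le_sum hfiber
    _ = (72 / K ^ 3) * ∑ j ∈ F.image jf, (1 : ℝ) / (j : ℝ) ^ 2 := by
        rw [Finset.mul_sum]
    _ ≤ (72 / K ^ 3) * 2 := by
        apply mul_le_mul_of_nonneg_left _ (by positivity)
        apply sum_inv_sq_le
        intro j hj
        obtain ⟨m₀, hm₀F, hm₀⟩ := Finset.mem_image.1 hj
        exact hm₀ ▸ hjfpos m₀ hm₀F
    _ = 144 / K ^ 3 := by ring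

theorem sum_cubed_inverse_dist_le (K : ℝ) (hK : 0 < K) (E : Set ℂ)
    (hE : KSparse K E) (z : ℂ) (s : ℂ) (hs : s ∈ E)
    (hclosest : ∀ m ∈ E, ‖z - s‖ ≤ ‖z - m‖) :
    ∑' m : ↥(E \ {s}), 1 / ‖z - (m : ℂ)‖ ^ 3 ≤ 200 / K ^ 3 := by
  classical
  apply tsum_le_of_sum_le' (by positivity)
  intro F
  have key : ∑ m ∈ F, 1 / ‖z - (m : ℂ)‖ ^ 3 ≤ 144 / K ^ 3 := by
    have hinj : ∀ x ∈ F, ∀ y ∈ F, (x : ℂ) = (y : ℂ) → x = y :=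
      fun a _ b _ h => Subtype.ext h
    calc ∑ m ∈ F, 1 / ‖z - (m : ℂ)‖ ^ 3
        = ∑ x ∈ F.image (fun m : ↥(E \ {s}) => (m : ℂ)),
            1 / ‖z - x‖ ^ 3 :=
          (Finset.sum_image (f := fun x : ℂ => 1 / ‖z - x‖ ^ 3)
            (g := fun m : ↥(E \ {s}) => (m : ℂ)) hinj).symm
      _ ≤ 144 / K ^ 3 := by
          apply finsum_bound K hK E hE z s hs hclosest
          intro x hx
          simp only [Finset.coe_image, Set.mem_image, Finset.mem_coe] at hx
          obtain ⟨m, _, rfl⟩ := hx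
          exact m.2
  have h200 : (144 : ℝ) / K ^ 3 ≤ 200 / K ^ 3 :=
    (div_le_div_iff_of_pos_right (by positivity)).2 (by norm_num)
  linarith [key, h200]
end

section
/- For a K-sparse set E in the complex plane and any z ∈ ℂ, letting s be a closest point of E to z, one has ∑_{m ∈ E, m ≠ s} 1/|z−m|⁴ ≤ 800·K⁻⁴. -/
open MeasureTheory

noncomputable def cfun (n : ℕ) : ℝ := min 1 (1 / (Real.sqrt n - 1) ^ 4)

lemma sqrt3_ge : (1.7:ℝ) ≤ Real.sqrt 3 := by
  rw [show (1.7:ℝ) = Real.sqrt (1.7^2) from (Real.sqrt_sq (by norm_num)).symm]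
  exact Real.sqrt_le_sqrt (by norm_num)

lemma sqrt2_ge : (1.4:ℝ) ≤ Real.sqrt 2 := by
  rw [show (1.4:ℝ) = Real.sqrt (1.4^2) from (Real.sqrt_sq (by norm_num)).symm]
  exact Real.sqrt_le_sqrt (by norm_num)

lemma cterm (x : ℝ) (hx : 3 ≤ x) : 1 / (Real.sqrt x - 1) ^ 4 ≤ 96 * (1/(x-1) - 1/x) := by
  have ht : (1.7:ℝ) ≤ Real.sqrt x := le_trans sqrt3_ge (Real.sqrt_le_sqrt hx)
  set t := Real.sqrt x with hts
  have htx : t ^ 2 = x := Real.sq_sqrt (by linarith)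
  have h1 : (0:ℝ) < t - 1 := by linarith
  have h2 : (1:ℝ)/(x-1) - 1/x = 1/((x-1)*x) := by
    rw [div_sub_div _ _ (by linarith : x - 1 ≠ 0) (by linarith : x ≠ 0)]
    congr 1; ring
  rw [h2, mul_one_div, div_le_div_iff₀ (by positivity) (by nlinarith)]
  have key : (x - 1) * x ≤ 96 * (t-1)^4 := by
    rw [← htx]
    nlinarith [pow_pos h1 2, pow_pos h1 3, sq_nonneg (t-1), mul_pos (pow_pos h1 3) h1,
      sq_nonneg ((t-1)^2 - 1)]
  nlinarith [pow_pos h1 4]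

lemma tele (M : ℕ) : ∑ j ∈ Finset.range M, ((1:ℝ)/(j+2) - 1/(j+3)) ≤ 1/2 := by
  have := Finset.sum_range_sub' (f := fun j : ℕ => (1:ℝ)/(j+2)) M
  beta_reduce at this
  calc ∑ j ∈ Finset.range M, ((1:ℝ)/(j+2) - 1/(j+3))
      = (1:ℝ)/(↑(0:ℕ)+2) - 1/(M+2) := by
        rw [← this]; apply Finset.sum_congr rfl; intro j _; push_cast; ring_nf
    _ ≤ 1/2 := by
        have : (0:ℝ) ≤ 1/(M+2) := by positivity
        norm_num; linarith

lemma Cbound (N : ℕ) : ∑ j ∈ Finset.range N, cfun (j+2) ≤ 49 := by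
  cases N with
  | zero => norm_num
  | succ M =>
    rw [Finset.sum_range_succ']
    have h1 : cfun (0+2) ≤ 1 := min_le_left _ _
    have h2 : ∑ j ∈ Finset.range M, cfun (j+1+2) ≤ 48 := by
      calc ∑ j ∈ Finset.range M, cfun (j+1+2)
          ≤ ∑ j ∈ Finset.range M, 96 * ((1:ℝ)/(j+2) - 1/(j+3)) := by
            apply Finset.sum_le_sum
            intro j _
            refine le_trans (min_le_right _ _) ?_
            have := cterm (j+1+2 : ℕ) (by push_cast; linarith)
            push_cast at this ⊢
            convert this using 3 <;> first | ring | rfl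
        _ = 96 * ∑ j ∈ Finset.range M, ((1:ℝ)/(j+2) - 1/(j+3)) := by rw [Finset.mul_sum]
        _ ≤ 96 * (1/2) := by have := tele M; linarith
        _ = 48 := by norm_num
    linarith

lemma packing (K r : ℝ) (hK : 0 < K) (z : ℂ) (G : Finset ℂ)
    (hsep : ∀ m ∈ G, ∀ m' ∈ G, m ≠ m' → K ≤ dist m m')
    (hr : ∀ m ∈ G, dist z m ≤ r) :
    (G.card : ℝ) * (K / 2) ^ 2 ≤ (r + K / 2) ^ 2 := by
  rcases G.eq_empty_or_nonempty with h | ⟨m₁, hm₁⟩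
  · simp [h]; positivity
  have hr0 : 0 ≤ r := le_trans dist_nonneg (hr m₁ hm₁)
  have hdisj : (↑G : Set ℂ).PairwiseDisjoint (fun m => Metric.ball m (K / 2)) := by
    intro a ha b hb hab
    exact Metric.ball_disjoint_ball (by linarith [hsep a ha b hb hab])
  have hsub : (⋃ m ∈ G, Metric.ball m (K / 2)) ⊆ Metric.ball z (r + K / 2) := by
    intro x hx
    simp only [Set.mem_iUnion] at hx
    obtain ⟨m, hm, hx⟩ := hx
    rw [Metric.mem_ball] at hx ⊢
    calc dist x z ≤ dist x m + dist m z := dist_triangle x m z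
    _ < K / 2 + r := by rw [dist_comm m z]; linarith [hr m hm]
    _ = r + K / 2 := by ring
  have hvol := measure_mono (μ := volume) hsub
  rw [measure_biUnion_finset hdisj (fun m _ => measurableSet_ball)] at hvol
  simp only [Complex.volume_ball, Finset.sum_const, nsmul_eq_mul] at hvol
  have hπ : (NNReal.pi : ENNReal) ≠ 0 := by
    simp [NNReal.pi_ne_zero]
  have hπt : (NNReal.pi : ENNReal) ≠ ⊤ := ENNReal.coe_ne_top
  rw [← mul_assoc] at hvol
  have hvol2 := (ENNReal.mul_le_mul_iff_left hπ hπt).mp hvol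
  have hK2 : (0:ℝ) ≤ K / 2 := by linarith
  rw [← ENNReal.ofReal_pow hK2, ← ENNReal.ofReal_natCast, ← ENNReal.ofReal_mul (by positivity),
    ← ENNReal.ofReal_pow (by positivity)] at hvol2
  exact (ENNReal.ofReal_le_ofReal_iff (by positivity)).mp hvol2

lemma main_ind (K : ℝ) (hK : 0 < K) (E : Set ℂ) (hE : KSparse K E) (z s : ℂ) (hs : s ∈ E)
    (hclosest : ∀ m ∈ E, ‖z - s‖ ≤ ‖z - m‖) :
    ∀ (N : ℕ) (F : Finset ℂ), F.card = N → ↑F ⊆ E \ {s} →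
    ∑ m ∈ F, 1 / ‖z - m‖ ^ 4 ≤ (2/K)^4 * ∑ j ∈ Finset.range N, cfun (j+2) := by
  intro N
  induction N with
  | zero => intro F hcard _; rw [Finset.card_eq_zero.mp hcard]; simp
  | succ N ih =>
    intro F hcard hsub
    have hne : F.Nonempty := Finset.card_pos.mp (by omega)
    obtain ⟨m₀, hm₀, hmax⟩ := F.exists_max_image (fun m => ‖z - m‖) hne
    have hm₀E : m₀ ∈ E \ {s} := hsub hm₀
    have hm₀ne : m₀ ≠ s := hm₀E.2
    have hsF : s ∉ F := fun h => (hsub h).2 rfl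
    set r := ‖z - m₀‖ with hrdef
    -- r ≥ K/2
    have htri : ‖m₀ - s‖ ≤ ‖z - m₀‖ + ‖z - s‖ := by
      calc ‖m₀ - s‖ = ‖(z - s) - (z - m₀)‖ := by ring_nf
      _ ≤ ‖z - s‖ + ‖z - m₀‖ := by
          exact (norm_sub_le _ _)
      _ = ‖z - m₀‖ + ‖z - s‖ := by ring
    have hd2 : K / 2 ≤ r := by
      have h1 : K ≤ ‖m₀ - s‖ := hE m₀ hm₀E.1 s hs hm₀ne
      have h2 := hclosest m₀ hm₀E.1
      rw [hrdef]; linarith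
    have hr0 : 0 < r := by linarith
    -- packing
    have hpack : ((N:ℝ) + 2) * (K / 2) ^ 2 ≤ (r + K / 2) ^ 2 := by
      have hcardG : (insert s F).card = N + 2 := by
        rw [Finset.card_insert_of_notMem hsF, hcard]
      have := packing K r hK z (insert s F)
        (fun m hm m' hm' hne' => by
          have hmE : m ∈ E := by
            rcases Finset.mem_insert.mp hm with h | h
            · rw [h]; exact hs
            · exact (hsub h).1
          have hm'E : m' ∈ E := by
            rcases Finset.mem_insert.mp hm' with h | h
            · rw [h]; exact hs
            · exact (hsub h).1
          rw [Complex.dist_eq]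
          exact hE m hmE m' hm'E hne')
        (fun m hm => by
          rw [Complex.dist_eq]
          rcases Finset.mem_insert.mp hm with h | h
          · rw [h]; exact hclosest m₀ hm₀E.1
          · exact hmax m h)
      rw [hcardG] at this
      push_cast at this
      exact this
    -- r ≥ (√(N+2) - 1) * (K/2)
    have hsq : Real.sqrt ((N:ℝ)+2) * (K/2) ≤ r + K/2 := by
      have h1 := Real.sqrt_le_sqrt hpack
      rw [Real.sqrt_mul (by positivity), Real.sqrt_sq (by linarith),
        Real.sqrt_sq (by linarith)] at h1
      exact h1
    have hsqrtpos : (1.4:ℝ) ≤ Real.sqrt ((N:ℝ)+2) := by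
      refine le_trans sqrt2_ge (Real.sqrt_le_sqrt ?_)
      have : (0:ℝ) ≤ N := Nat.cast_nonneg N
      linarith
    have hd3 : (Real.sqrt ((N:ℝ)+2) - 1) * (K/2) ≤ r := by nlinarith
    -- term bound
    have hinv : ∀ a : ℝ, 0 < a → a ≤ r → 1/r^4 ≤ 1/a^4 := fun a ha har =>
      one_div_le_one_div_of_le (by positivity) (pow_le_pow_left₀ (le_of_lt ha) har 4)
    have hb1 : 1/r^4 ≤ (2/K)^4 * 1 := by
      calc 1/r^4 ≤ 1/(K/2)^4 := hinv _ (by positivity) hd2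
      _ = (2/K)^4 * 1 := by
          rw [mul_one, div_pow, div_pow, one_div_div]
    have hb2 : 1/r^4 ≤ (2/K)^4 * (1/(Real.sqrt ((N:ℝ)+2) - 1)^4) := by
      have hspos : (0:ℝ) < Real.sqrt ((N:ℝ)+2) - 1 := by linarith
      calc 1/r^4 ≤ 1/((Real.sqrt ((N:ℝ)+2) - 1) * (K/2))^4 :=
            hinv _ (by positivity) hd3
      _ = (2/K)^4 * (1/(Real.sqrt ((N:ℝ)+2) - 1)^4) := by
          field_simp
    have hterm : 1/r^4 ≤ (2/K)^4 * cfun (N+2) := by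
      have : cfun (N+2) = min 1 (1 / (Real.sqrt ((N:ℝ)+2) - 1) ^ 4) := by
        unfold cfun; push_cast; ring_nf
      rw [this, mul_min_of_nonneg _ _ (by positivity)]
      exact le_min hb1 hb2
    -- assemble
    rw [← Finset.add_sum_erase F _ hm₀, Finset.sum_range_succ, mul_add]
    have hih := ih (F.erase m₀) (by rw [Finset.card_erase_of_mem hm₀, hcard]; rfl)
      (Set.Subset.trans (by exact_mod_cast Finset.coe_subset.mpr (Finset.erase_subset m₀ F)) hsub)
    have : 1 / ‖z - m₀‖ ^ 4 = 1/r^4 := rfl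
    rw [this]
    linarith

theorem sum_fourth_inverse_dist_le (K : ℝ) (hK : 0 < K) (E : Set ℂ)
    (hE : KSparse K E) (z : ℂ) (s : ℂ) (hs : s ∈ E)
    (hclosest : ∀ m ∈ E, ‖z - s‖ ≤ ‖z - m‖) :
    ∑' m : ↥(E \ {s}), 1 / ‖z - (m : ℂ)‖ ^ 4 ≤ 800 / K ^ 4 := by
  apply tsum_le_of_sum_le' (by positivity)
  intro u
  have hinj : Set.InjOn (fun m : ↥(E \ {s}) => (m : ℂ)) ↑u :=
    fun x _ y _ h => Subtype.coe_injective h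
  have himg : ∑ i ∈ u, 1 / ‖z - (i : ℂ)‖ ^ 4
      = ∑ m ∈ u.image (fun m : ↥(E \ {s}) => (m : ℂ)), 1 / ‖z - m‖ ^ 4 :=
    (Finset.sum_image (f := fun m : ℂ => 1 / ‖z - m‖ ^ 4) (fun x hx y hy h => hinj hx hy h)).symm
  rw [himg]
  set F := u.image (fun m : ↥(E \ {s}) => (m : ℂ)) with hF
  have hFsub : ↑F ⊆ E \ {s} := by
    intro m hm
    simp only [hF, Finset.coe_image, Set.mem_image] at hm
    obtain ⟨x, _, rfl⟩ := hm
    exact x.2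
  calc ∑ m ∈ F, 1 / ‖z - m‖ ^ 4
      ≤ (2/K)^4 * ∑ j ∈ Finset.range F.card, cfun (j+2) :=
        main_ind K hK E hE z s hs hclosest F.card F rfl hFsub
    _ ≤ (2/K)^4 * 49 := by
        have := Cbound F.card
        have h4 : (0:ℝ) ≤ (2/K)^4 := by positivity
        nlinarith
    _ = 784 / K^4 := by rw [div_pow]; ring
    _ ≤ 800 / K^4 := by gcongr <;> norm_num
end

section
/- Let f be an entire function such that |f(z)| ≤ 1 implies |f'(z)| ≤ 2 for all z ∈ ℂ. Then |f'(z)| ≤ 2·max{|f(z)|, 1} for all z ∈ ℂ. -/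
open Filter Topology Complex


/-- Second derivative test: at an interior local max, second derivative ≤ 0. -/
lemma secondDeriv_nonpos_of_isLocalMax {ψ ψ' : ℝ → ℝ} {q ε : ℝ} (hε : 0 < ε)
    (hd : ∀ t, |t| < ε → HasDerivAt ψ (ψ' t) t)
    (hd2 : HasDerivAt ψ' q 0)
    (hmax : IsLocalMax ψ 0) : q ≤ 0 := by
  by_contra hq
  push_neg at hq
  have h0 : ψ' 0 = 0 := hmax.hasDerivAt_eq_zero (hd 0 (by simpa using hε))
  -- ψ' t > 0 for small positive t
  have hslope : Tendsto (fun t : ℝ => ψ' t / t) (𝓝[>] 0) (𝓝 q) := by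
    have h2 := (hasDerivWithinAt_iff_tendsto_slope).1 (hd2.hasDerivWithinAt (s := Set.Ioi (0:ℝ)))
    have hsub : Set.Ioi (0:ℝ) \ {0} = Set.Ioi (0:ℝ) := by
      ext x; simp only [Set.mem_diff, Set.mem_Ioi, Set.mem_singleton_iff, and_iff_left_iff_imp]
      intro hx; exact ne_of_gt hx
    rw [hsub] at h2
    refine h2.congr' ?_
    filter_upwards [self_mem_nhdsWithin] with t ht
    simp [slope, h0, div_eq_inv_mul]
  have hpos : ∀ᶠ t in 𝓝[>] (0:ℝ), 0 < ψ' t := by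
    filter_upwards [hslope.eventually (eventually_gt_nhds (show q/2 < q by linarith)),
      self_mem_nhdsWithin] with t ht ht'
    have htpos : (0:ℝ) < t := ht'
    nlinarith [mul_pos (lt_trans (show (0:ℝ) < q/2 by linarith) ht) htpos, div_mul_cancel₀ (ψ' t) (ne_of_gt htpos)]
  -- get δ
  rw [eventually_nhdsWithin_iff] at hpos
  rcases Metric.eventually_nhds_iff.1 hpos with ⟨δ₁, hδ₁, hball⟩
  rcases Metric.eventually_nhds_iff.1 hmax with ⟨δ₂, hδ₂, hmaxball⟩
  set δ := min (min δ₁ δ₂) ε with hδdef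
  have hδ : 0 < δ := by positivity
  have hδe : δ ≤ ε := min_le_right _ _
  have hδ1 : δ ≤ δ₁ := le_trans (min_le_left _ _) (min_le_left _ _)
  have hδ2 : δ ≤ δ₂ := le_trans (min_le_left _ _) (min_le_right _ _)
  have hmono : StrictMonoOn ψ (Set.Icc 0 (δ/2)) := by
    apply strictMonoOn_of_deriv_pos (convex_Icc _ _)
    · intro x hx
      simp only [Set.mem_Icc] at hx
      refine (hd x ?_).continuousAt.continuousWithinAt
      have : |x| ≤ δ/2 := by rw [abs_le]; constructor <;> linarith [hx.1, hx.2]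
      linarith
    · intro x hx
      rw [interior_Icc, Set.mem_Ioo] at hx
      have hxδ : x < δ := by linarith [hx.2]
      have hxε : |x| < ε := by rw [abs_lt]; constructor <;> linarith [hx.1]
      rw [(hd x hxε).deriv]
      apply hball
      · simp only [Real.dist_eq, sub_zero]
        rw [abs_of_pos hx.1]; linarith
      · exact hx.1
  have hlt : ψ 0 < ψ (δ/2) := by
    apply hmono (Set.mem_Icc.2 ⟨le_refl 0, by linarith⟩) (Set.mem_Icc.2 ⟨by linarith, le_refl _⟩)
    linarith
  have hle : ψ (δ/2) ≤ ψ 0 := by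
    apply hmaxball
    simp only [Real.dist_eq, sub_zero]
    rw [abs_of_pos (by linarith)]; linarith
  linarith

noncomputable def Gfun (f : ℂ → ℂ) (R r : ℝ) (z : ℂ) : ℝ :=
  ‖deriv f z‖ * (r^2 - ‖z‖^2) /
    (‖f z‖ * (Real.log (‖f z‖) + R) * (2*r))

set_option maxHeartbeats 1000000 in
lemma key_interior (f : ℂ → ℂ) (hf : Differentiable ℂ f) {R r : ℝ} (hR : 0 < R)
    {w : ℂ} (hfw : 1 < ‖f w‖) (hwr : ‖w‖ < r)
    (hfw' : deriv f w ≠ 0)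
    (hmax : IsLocalMax (Gfun f R r) w) :
    Gfun f R r w ≤ 1 := by
  have hr : 0 < r := lt_of_le_of_lt (norm_nonneg w) hwr
  have hfa : AnalyticOnNhd ℂ f Set.univ := analyticOnNhd_univ_iff_differentiable.2 hf
  have hf1 : Differentiable ℂ (deriv f) := analyticOnNhd_univ_iff_differentiable.1 hfa.deriv
  have hf2 : Differentiable ℂ (deriv (deriv f)) :=
    analyticOnNhd_univ_iff_differentiable.1 ((analyticOnNhd_univ_iff_differentiable.2 hf1).deriv)
  have hfw0 : f w ≠ 0 := by
    intro h0; rw [h0] at hfw; simp at hfw; linarith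
  have hcf : Continuous fun z => ‖f z‖ := continuous_norm.comp hf.continuous
  have hc1 : ∀ᶠ z in 𝓝 w, 1 < ‖f z‖ :=
    hcf.continuousAt.eventually (eventually_gt_nhds hfw)
  have hc2 : ∀ᶠ z in 𝓝 w, ‖z‖ < r :=
    continuous_norm.continuousAt.eventually (eventually_lt_nhds hwr)
  have hc3 : ∀ᶠ z in 𝓝 w, deriv f z ≠ 0 := hf1.continuous.continuousAt.eventually_ne hfw'
  have hc4 : ∀ᶠ z in 𝓝 w, f z / f w ∈ Complex.slitPlane := by
    have hca : ContinuousAt (fun z => f z / f w) w := (hf.continuous.div_const _).continuousAt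
    have h1 : f w / f w = 1 := div_self hfw0
    apply hca.eventually_mem
    rw [h1]
    exact isOpen_slitPlane.mem_nhds one_mem_slitPlane
  have hc5 : ∀ᶠ z in 𝓝 w, deriv f z / deriv f w ∈ Complex.slitPlane := by
    have hca : ContinuousAt (fun z => deriv f z / deriv f w) w :=
      (hf1.continuous.div_const _).continuousAt
    have h1 : deriv f w / deriv f w = 1 := div_self hfw'
    apply hca.eventually_mem
    rw [h1]
    exact isOpen_slitPlane.mem_nhds one_mem_slitPlane
  have hc6 : ∀ᶠ z in 𝓝 w, Gfun f R r z ≤ Gfun f R r w := hmax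
  rcases Metric.eventually_nhds_iff.1
    ((((((hc1.and hc2).and hc3).and hc4).and hc5).and hc6)) with ⟨ε, hε, hball⟩
  -- notation
  set s : ℝ := ‖f w‖ with hsdef
  set p : ℝ := ‖deriv f w‖ with hpdef
  have hppos : 0 < p := by rw [hpdef]; exact norm_pos_iff.mpr hfw'
  have hspos : (0:ℝ) < s := by linarith
  set c : ℝ := Real.log s + R with hcdef
  have hcpos : 0 < c := by
    have : (0:ℝ) ≤ Real.log s := Real.log_nonneg (le_of_lt hfw)
    linarith
  set F1 : ℂ → ℂ := fun z => deriv f z / f z with hF1def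
  set F2 : ℂ → ℂ := fun z => deriv (deriv f) z / deriv f z with hF2def
  have habs2 : ∀ z : ℂ, ‖z‖^2 = z.re^2 + z.im^2 := fun z => by
    rw [Complex.sq_norm, Complex.normSq_apply]; ring
  set g : ℝ := r^2 - (w.re^2 + w.im^2) with hgdef
  have hgpos : 0 < g := by
    have h1 : w.re^2 + w.im^2 < r^2 := by
      rw [← habs2 w]
      exact pow_lt_pow_left₀ hwr (norm_nonneg w) (two_ne_zero)
    rw [hgdef]; linarith
  -- the directional inequality
  have dirIneq : ∀ v : ℂ, ‖v‖ = 1 →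
      ((v^2 * deriv F2 w).re - (v^2 * deriv F1 w).re) * (c^2*g^2)
      - ((v^2 * deriv F1 w).re * c - (v * F1 w).re * (v * F1 w).re) * g^2
      + ((-(2*(v.re^2 + v.im^2))) * g
          - (2*(w.re*v.re) + 2*(w.im*v.im)) * (2*(w.re*v.re) + 2*(w.im*v.im))) * c^2
        ≤ 0 := by
    intro v hv
    set ζ : ℝ → ℂ := fun t => w + (t:ℂ) * v with hζdef
    have hζ0 : ζ 0 = w := by simp [hζdef]
    have hζline : ∀ t : ℝ, HasDerivAt ζ v t := by
      intro t
      have h := ((Complex.ofRealCLM.hasDerivAt (x := t)).mul_const v).const_add w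
      simp only [Complex.ofRealCLM_apply, Complex.ofReal_one, one_mul] at h
      exact h
    have hζmem : ∀ t : ℝ, |t| < ε → dist (ζ t) w < ε := by
      intro t ht
      rw [Complex.dist_eq]
      simp only [hζdef, add_sub_cancel_left]
      rw [norm_mul, Complex.norm_real, Real.norm_eq_abs, hv, mul_one]
      exact ht
    -- conditions along the line
    have hcond := fun (t : ℝ) (ht : |t| < ε) => hball (hζmem t ht)
    have hfz : ∀ t : ℝ, |t| < ε → 1 < ‖f (ζ t)‖ := fun t ht => (hcond t ht).1.1.1.1.1
    have hfz0 : ∀ t : ℝ, |t| < ε → f (ζ t) ≠ 0 := by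
      intro t ht h0
      have := hfz t ht; rw [h0] at this; simp at this; linarith
    have hzr : ∀ t : ℝ, |t| < ε → ‖ζ t‖ < r := fun t ht => (hcond t ht).1.1.1.1.2
    have hdz : ∀ t : ℝ, |t| < ε → deriv f (ζ t) ≠ 0 := fun t ht => (hcond t ht).1.1.1.2
    have hsl1 : ∀ t : ℝ, |t| < ε → f (ζ t) / f w ∈ Complex.slitPlane :=
      fun t ht => (hcond t ht).1.1.2
    have hsl2 : ∀ t : ℝ, |t| < ε → deriv f (ζ t) / deriv f w ∈ Complex.slitPlane :=
      fun t ht => (hcond t ht).1.2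
    have hGle : ∀ t : ℝ, |t| < ε → Gfun f R r (ζ t) ≤ Gfun f R r w := fun t ht => (hcond t ht).2
    -- basic line derivatives
    have hFline : ∀ t : ℝ, HasDerivAt (fun u : ℝ => f (ζ u)) (v * deriv f (ζ t)) t := by
      intro t
      have := ((hf (ζ t)).hasDerivAt).scomp t (hζline t)
      simpa [Function.comp_def, smul_eq_mul, mul_comm] using this
    have hF'line : ∀ t : ℝ, HasDerivAt (fun u : ℝ => deriv f (ζ u)) (v * deriv (deriv f) (ζ t)) t := by
      intro t
      have := ((hf1 (ζ t)).hasDerivAt).scomp t (hζline t)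
      simpa [Function.comp_def, smul_eq_mul, mul_comm] using this
    -- α and β
    set α : ℝ → ℝ := fun u => (Complex.log (f (ζ u) / f w)).re with hαdef
    set β : ℝ → ℝ := fun u => (Complex.log (deriv f (ζ u) / deriv f w)).re with hβdef
    have hA1 : ∀ t : ℝ, |t| < ε → HasDerivAt α ((v * F1 (ζ t)).re) t := by
      intro t ht
      have h1 : HasDerivAt (fun u : ℝ => f (ζ u) / f w) (v * deriv f (ζ t) / f w) t :=
        (hFline t).div_const _
      have h2 := h1.clog_real (hsl1 t ht)
      have h3 : (v * deriv f (ζ t) / f w) / (f (ζ t) / f w) = v * F1 (ζ t) := by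
        rw [hF1def]
        field_simp
      rw [h3] at h2
      simpa [Function.comp_def, hαdef] using (Complex.reCLM.hasFDerivAt.comp_hasDerivAt t h2)
    have hB1 : ∀ t : ℝ, |t| < ε → HasDerivAt β ((v * F2 (ζ t)).re) t := by
      intro t ht
      have h1 : HasDerivAt (fun u : ℝ => deriv f (ζ u) / deriv f w)
          (v * deriv (deriv f) (ζ t) / deriv f w) t := (hF'line t).div_const _
      have h2 := h1.clog_real (hsl2 t ht)
      have h3 : (v * deriv (deriv f) (ζ t) / deriv f w) / (deriv f (ζ t) / deriv f w)
          = v * F2 (ζ t) := by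
        rw [hF2def]
        field_simp
      rw [h3] at h2
      simpa [Function.comp_def, hβdef] using (Complex.reCLM.hasFDerivAt.comp_hasDerivAt t h2)
    have hA2 : ∀ t : ℝ, |t| < ε → HasDerivAt (fun u => (v * F1 (ζ u)).re)
        ((v^2 * deriv F1 (ζ t)).re) t := by
      intro t ht
      have hd : DifferentiableAt ℂ F1 (ζ t) := (hf1 (ζ t)).div (hf (ζ t)) (hfz0 t ht)
      have h1 := (hd.hasDerivAt.scomp t (hζline t)).const_mul v
      have h2 : v * (v • deriv F1 (ζ t)) = v^2 * deriv F1 (ζ t) := by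
        rw [smul_eq_mul]; ring
      rw [h2] at h1
      simpa [Function.comp_def] using (Complex.reCLM.hasFDerivAt.comp_hasDerivAt t h1)
    have hB2 : ∀ t : ℝ, |t| < ε → HasDerivAt (fun u => (v * F2 (ζ u)).re)
        ((v^2 * deriv F2 (ζ t)).re) t := by
      intro t ht
      have hd : DifferentiableAt ℂ F2 (ζ t) := (hf2 (ζ t)).div (hf1 (ζ t)) (hdz t ht)
      have h1 := (hd.hasDerivAt.scomp t (hζline t)).const_mul v
      have h2 : v * (v • deriv F2 (ζ t)) = v^2 * deriv F2 (ζ t) := by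
        rw [smul_eq_mul]; ring
      rw [h2] at h1
      simpa [Function.comp_def] using (Complex.reCLM.hasFDerivAt.comp_hasDerivAt t h1)
    -- gamma
    set γ : ℝ → ℝ := fun t => (w.re + t*v.re)^2 + (w.im + t*v.im)^2 with hγdef
    set γd : ℝ → ℝ := fun t => 2*(w.re + t*v.re)*v.re + 2*(w.im + t*v.im)*v.im with hγddef
    have hγ : ∀ t : ℝ, HasDerivAt γ (γd t) t := by
      intro t
      have h1 : HasDerivAt (fun t : ℝ => w.re + t*v.re) v.re t := by
        simpa using ((hasDerivAt_id t).mul_const v.re).const_add w.re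
      have h2 : HasDerivAt (fun t : ℝ => w.im + t*v.im) v.im t := by
        simpa using ((hasDerivAt_id t).mul_const v.im).const_add w.im
      have := (h1.pow 2).add (h2.pow 2)
      simp only [hγddef]
      convert this using 1
      rfl
      rfl
      rfl
      ring
    have hγd : ∀ t : ℝ, HasDerivAt γd (2*(v.re^2 + v.im^2)) t := by
      intro t
      have h1 : HasDerivAt (fun t : ℝ => 2*(w.re + t*v.re)*v.re) (2*v.re*v.re) t := by
        have : HasDerivAt (fun t : ℝ => w.re + t*v.re) v.re t := by
          simpa using ((hasDerivAt_id t).mul_const v.re).const_add w.re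
        simpa [mul_comm, mul_assoc, mul_left_comm] using (this.const_mul 2).mul_const v.re
      have h2 : HasDerivAt (fun t : ℝ => 2*(w.im + t*v.im)*v.im) (2*v.im*v.im) t := by
        have : HasDerivAt (fun t : ℝ => w.im + t*v.im) v.im t := by
          simpa using ((hasDerivAt_id t).mul_const v.im).const_add w.im
        simpa [mul_comm, mul_assoc, mul_left_comm] using (this.const_mul 2).mul_const v.im
      have := h1.add h2
      convert this using 1
      rfl
      rfl
      rfl
      ring
    have hγval : ∀ t : ℝ, γ t = ‖ζ t‖^2 := by
      intro t
      rw [habs2]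
      simp [hγdef, hζdef, Complex.add_re, Complex.add_im, Complex.mul_re, Complex.mul_im,
        Complex.ofReal_re, Complex.ofReal_im]
    have hγlt : ∀ t : ℝ, |t| < ε → γ t < r^2 := by
      intro t ht
      rw [hγval t]
      exact pow_lt_pow_left₀ (hzr t ht) (norm_nonneg _) (two_ne_zero)
    have hγ0 : γ 0 = w.re^2 + w.im^2 := by simp [hγdef]
    have hγd0 : γd 0 = 2*(w.re*v.re) + 2*(w.im*v.im) := by simp [hγddef]; ring
    -- values of α, β
    have hαval : ∀ t : ℝ, |t| < ε → α t = Real.log (‖f (ζ t)‖) - Real.log s := by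
      intro t ht
      rw [hαdef]
      simp only [Complex.log_re, norm_div]
      rw [Real.log_div (ne_of_gt (by linarith [hfz t ht])) (ne_of_gt hspos)]
    have hβval : ∀ t : ℝ, |t| < ε → β t = Real.log (‖deriv f (ζ t)‖) - Real.log p := by
      intro t ht
      rw [hβdef]
      simp only [Complex.log_re, norm_div]
      have h1 : ‖deriv f (ζ t)‖ ≠ 0 := by
        simpa using hdz t ht
      rw [Real.log_div h1 (ne_of_gt hppos)]
    have hα0 : α 0 = 0 := by
      rw [hαdef]
      simp only [hζ0, div_self hfw0, Complex.log_one, Complex.zero_re]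
    have hcα : ∀ t : ℝ, |t| < ε → 0 < c + α t := by
      intro t ht
      rw [hαval t ht, hcdef]
      have : 0 < Real.log (‖f (ζ t)‖) := Real.log_pos (hfz t ht)
      linarith
    -- psi and its derivatives
    set K : ℝ := Real.log p - Real.log s - Real.log (2*r) with hKdef
    set ψ : ℝ → ℝ := fun t => β t - α t - Real.log (c + α t) + Real.log (r^2 - γ t) + K with hψdef
    set ψd : ℝ → ℝ := fun t => (v * F2 (ζ t)).re - (v * F1 (ζ t)).re
      - (v * F1 (ζ t)).re/(c + α t) + (-(γd t))/(r^2 - γ t) with hψddef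
    have hψder : ∀ t : ℝ, |t| < ε → HasDerivAt ψ (ψd t) t := by
      intro t ht
      have hlog1 : HasDerivAt (fun u => Real.log (c + α u)) ((v * F1 (ζ t)).re/(c + α t)) t :=
        ((hA1 t ht).const_add c).log (ne_of_gt (hcα t ht))
      have hlog2 : HasDerivAt (fun u => Real.log (r^2 - γ u)) ((-(γd t))/(r^2 - γ t)) t :=
        ((hγ t).const_sub (r^2)).log (ne_of_gt (sub_pos.2 (hγlt t ht)))
      exact ((((hB1 t ht).sub (hA1 t ht)).sub hlog1).add hlog2).add_const K
    have hε0 : |(0:ℝ)| < ε := by simpa using hε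
    have hQ : HasDerivAt ψd
        ((v^2 * deriv F2 w).re - (v^2 * deriv F1 w).re
          - ((v^2 * deriv F1 w).re * (c + α 0) - (v * F1 w).re * (v * F1 w).re)/(c + α 0)^2
          + ((-(2*(v.re^2 + v.im^2))) * (r^2 - γ 0) - (-(γd 0)) * (-(γd 0)))/(r^2 - γ 0)^2) 0 := by
      have h1 : HasDerivAt (fun u => (v * F1 (ζ u)).re/(c + α u))
          (((v^2 * deriv F1 (ζ 0)).re * (c + α 0) - (v * F1 (ζ 0)).re * (v * F1 (ζ 0)).re)
            /(c + α 0)^2) 0 :=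
        (hA2 0 hε0).div ((hA1 0 hε0).const_add c) (ne_of_gt (hcα 0 hε0))
      have h2 : HasDerivAt (fun u => (-(γd u))/(r^2 - γ u))
          (((-(2*(v.re^2 + v.im^2))) * (r^2 - γ 0) - (-(γd 0)) * (-(γd 0)))/(r^2 - γ 0)^2) 0 := by
        exact ((hγd 0).neg).div ((hγ 0).const_sub (r^2)) (ne_of_gt (sub_pos.2 (hγlt 0 hε0)))
      have := (((hB2 0 hε0).sub (hA2 0 hε0)).sub h1).add h2
      rw [hζ0] at this
      exact this
    -- local maximality of psi
    have hGpos : ∀ t : ℝ, |t| < ε → 0 < Gfun f R r (ζ t) := by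
      intro t ht
      rw [Gfun]
      have h1 : 0 < ‖deriv f (ζ t)‖ := norm_pos_iff.mpr (hdz t ht)
      have h2 : 0 < r^2 - ‖ζ t‖^2 := by
        rw [← hγval t]; exact sub_pos.2 (hγlt t ht)
      have h3 : 0 < ‖f (ζ t)‖ := by linarith [hfz t ht]
      have h4 : 0 < Real.log (‖f (ζ t)‖) + R := by
        have := Real.log_pos (hfz t ht); linarith
      positivity
    have hlogG : ∀ t : ℝ, |t| < ε → ψ t = Real.log (Gfun f R r (ζ t)) := by
      intro t ht
      have h1 : (0:ℝ) < ‖deriv f (ζ t)‖ := norm_pos_iff.mpr (hdz t ht)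
      have h2 : (0:ℝ) < r^2 - ‖ζ t‖^2 := by
        rw [← hγval t]; exact sub_pos.2 (hγlt t ht)
      have h3 : (0:ℝ) < ‖f (ζ t)‖ := by linarith [hfz t ht]
      have h4 : (0:ℝ) < Real.log (‖f (ζ t)‖) + R := by
        have := Real.log_pos (hfz t ht); linarith
      rw [Gfun]
      rw [Real.log_div (by positivity) (by positivity)]
      rw [Real.log_mul (ne_of_gt h1) (ne_of_gt h2)]
      rw [Real.log_mul (by positivity) (by positivity)]
      rw [Real.log_mul (ne_of_gt h3) (ne_of_gt h4)]
      rw [hψdef]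
      simp only [hαval t ht, hβval t ht, hγval t, hKdef]
      have h5 : c + (Real.log (‖f (ζ t)‖) - Real.log s)
          = Real.log (‖f (ζ t)‖) + R := by rw [hcdef]; ring
      rw [h5]
      ring
    have hψmax : IsLocalMax ψ 0 := by
      have hev : ∀ᶠ t in 𝓝 (0:ℝ), ψ t ≤ ψ 0 := by
        rw [Metric.eventually_nhds_iff]
        refine ⟨ε, hε, fun {t} ht' => ?_⟩
        have ht : |t| < ε := by simpa [Real.dist_eq] using ht'
        rw [hlogG t ht, hlogG 0 hε0, hζ0]
        have := hGle t ht
        exact Real.log_le_log (hGpos t ht) (by rw [← hζ0] at this ⊢; exact this)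
      exact hev
    have hfinal := secondDeriv_nonpos_of_isLocalMax hε hψder hQ hψmax
    rw [hα0, hγ0, hγd0] at hfinal
    simp only [add_zero] at hfinal
    rw [← hgdef] at hfinal
    have hc0 : c ≠ 0 := ne_of_gt hcpos
    have hg0 : g ≠ 0 := ne_of_gt hgpos
    have hcg : (0:ℝ) < c^2 * g^2 := by positivity
    have hmul := mul_le_mul_of_nonneg_right hfinal (le_of_lt hcg)
    rw [zero_mul] at hmul
    have heq : ((v^2 * deriv F2 w).re - (v^2 * deriv F1 w).re
          - ((v^2 * deriv F1 w).re * c - (v * F1 w).re * (v * F1 w).re)/c^2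
          + ((-(2*(v.re^2 + v.im^2))) * g
              - (-(2*(w.re*v.re) + 2*(w.im*v.im))) * (-(2*(w.re*v.re) + 2*(w.im*v.im))))/g^2)
          * (c^2*g^2)
        = ((v^2 * deriv F2 w).re - (v^2 * deriv F1 w).re) * (c^2*g^2)
          - ((v^2 * deriv F1 w).re * c - (v * F1 w).re * (v * F1 w).re) * g^2
          + ((-(2*(v.re^2 + v.im^2))) * g
              - (2*(w.re*v.re) + 2*(w.im*v.im)) * (2*(w.re*v.re) + 2*(w.im*v.im))) * c^2 := by
      field_simp
    rw [heq] at hmul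
    exact hmul



  -- instantiate the two directions
  clear_value s p c g F1 F2
  have h1 := dirIneq 1 (by simp)
  have hI := dirIneq Complex.I (by simp)
  simp only [one_pow, one_mul, Complex.I_sq, neg_one_mul, Complex.neg_re, Complex.one_re,
    Complex.one_im, Complex.I_re, Complex.I_im, Complex.mul_re] at h1 hI
  set a : ℝ := (F1 w).re with hadef
  set b : ℝ := (F1 w).im with hbdef
  clear_value a b
  set X : ℝ := (deriv F2 w).re with hXdef
  set Y : ℝ := (deriv F1 w).re with hYdef
  clear_value X Y
  have hr2c : (4*g + 4*w.re^2 + 4*w.im^2)*c^2 = 4*r^2*c^2 := by rw [hgdef]; ring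
  have hsum : (a^2 + b^2) * g^2 ≤ 4*r^2*c^2 := by nlinarith [h1, hI, hr2c]
  have habsF1 : ‖F1 w‖ = p/s := by
    rw [hF1def]; simp only [norm_div]; rw [← hpdef, ← hsdef]
  have hab : a^2 + b^2 = (p/s)^2 := by
    rw [← habsF1, habs2 (F1 w), hadef, hbdef]
  have hp2 : p^2 * g^2 ≤ 4*r^2*c^2*s^2 := by
    have hps2 : p^2 = (a^2+b^2)*s^2 := by
      rw [hab]; field_simp
    have := mul_le_mul_of_nonneg_right hsum (sq_nonneg s)
    nlinarith [this]
  rw [Gfun]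
  rw [← hsdef, ← hpdef, ← hcdef]
  rw [habs2 w, ← hgdef]
  rw [div_le_one (by positivity)]
  nlinarith [hp2, hppos, hgpos, hcpos, hspos, hr,
    mul_pos (mul_pos (mul_pos hspos hcpos) hr) hgpos,
    mul_pos hppos hgpos, mul_pos (mul_pos hspos hcpos) hr]

lemma key_global (f : ℂ → ℂ) (hf : Differentiable ℂ f)
    (h : ∀ z : ℂ, ‖f z‖ ≤ 1 → ‖deriv f z‖ ≤ 2)
    {R : ℝ} (hR : 0 < R) {z0 : ℂ} (hz0 : 1 < ‖f z0‖) {r : ℝ}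
    (hr1 : ‖z0‖ < r) (hrR : R ≤ r) :
    Gfun f R r z0 ≤ r / R := by
  have hr : 0 < r := lt_of_le_of_lt (norm_nonneg z0) hr1
  have hf1 : Differentiable ℂ (deriv f) :=
    analyticOnNhd_univ_iff_differentiable.1 ((analyticOnNhd_univ_iff_differentiable.2 hf).deriv)
  have hcf : Continuous fun z => ‖f z‖ := continuous_norm.comp hf.continuous
  have hcf' : Continuous fun z => ‖deriv f z‖ :=
    continuous_norm.comp hf1.continuous
  set K : Set ℂ := Metric.closedBall 0 r ∩ {z | 1 ≤ ‖f z‖} with hK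
  have hKmem : ∀ z ∈ K, ‖z‖ ≤ r ∧ 1 ≤ ‖f z‖ := by
    intro z hz
    rcases hz with ⟨hz1, hz2⟩
    constructor
    · rw [Metric.mem_closedBall] at hz1
      simpa [Complex.dist_eq] using hz1
    · exact hz2
  have hKc : IsCompact K :=
    (isCompact_closedBall 0 r).inter_right (isClosed_le continuous_const hcf)
  have hz0K : z0 ∈ K := by
    constructor
    · rw [Metric.mem_closedBall]
      simpa [Complex.dist_eq] using le_of_lt hr1
    · exact le_of_lt hz0
  have hcont : ContinuousOn (Gfun f R r) K := by
    apply ContinuousOn.div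
    · exact (hcf'.mul (continuous_const.sub (continuous_norm.pow 2))).continuousOn
    · apply ContinuousOn.mul
      apply ContinuousOn.mul hcf.continuousOn
      · apply ContinuousOn.add _ continuousOn_const
        intro z hz
        have h1 : ‖f z‖ ≠ 0 := by
          have := (hKmem z hz).2; intro h0; rw [h0] at this; linarith
        exact (hcf.continuousAt.log h1).continuousWithinAt
      · exact continuousOn_const
    · intro z hz
      have h1 : (1:ℝ) ≤ ‖f z‖ := (hKmem z hz).2
      have h2 : 0 < Real.log (‖f z‖) + R := by
        have := Real.log_nonneg h1; linarith
      have h3 : (0:ℝ) < ‖f z‖ := by linarith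
      positivity
  obtain ⟨z1, hz1K, hz1max⟩ := hKc.exists_isMaxOn ⟨z0, hz0K⟩ hcont
  have hrR' : (1:ℝ) ≤ r / R := (one_le_div hR).2 hrR
  have hbound : Gfun f R r z1 ≤ r / R := by
    by_cases hfz1 : ‖f z1‖ ≤ 1
    · -- boundary case |f z1| = 1
      have hs1 : ‖f z1‖ = 1 := le_antisymm hfz1 (hKmem z1 hz1K).2
      have hp1 : ‖deriv f z1‖ ≤ 2 := h z1 hfz1
      rw [Gfun, hs1, Real.log_one]
      rw [div_le_iff₀ (by positivity)]
      have ha1 : ‖z1‖ ≤ r := (hKmem z1 hz1K).1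
      have ha2 : (0:ℝ) ≤ ‖z1‖ := norm_nonneg z1
      have hp0 : (0:ℝ) ≤ ‖deriv f z1‖ := norm_nonneg _
      have key : r / R * (1 * (0 + R) * (2*r)) = 2*r^2 := by field_simp; ring
      rw [key]
      nlinarith
    · push_neg at hfz1
      by_cases habsz : ‖z1‖ < r
      · by_cases hd : deriv f z1 = 0
        · rw [Gfun, hd]
          simp only [norm_zero, zero_mul, zero_div]
          positivity
        · -- interior maximum: apply the key lemma
          have hloc : IsLocalMax (Gfun f R r) z1 := by
            have hev1 : ∀ᶠ z in 𝓝 z1, ‖z‖ < r :=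
              continuous_norm.continuousAt.eventually (eventually_lt_nhds habsz)
            have hev2 : ∀ᶠ z in 𝓝 z1, 1 < ‖f z‖ :=
              hcf.continuousAt.eventually (eventually_gt_nhds hfz1)
            filter_upwards [hev1, hev2] with z h1 h2
            apply hz1max
            exact ⟨Metric.mem_closedBall.2 (by simpa [Complex.dist_eq] using le_of_lt h1),
              le_of_lt h2⟩
          exact le_trans (key_interior f hf hR hfz1 habsz hd hloc) hrR'
      · -- |z1| = r
        have : ‖z1‖ = r := le_antisymm (hKmem z1 hz1K).1 (not_lt.1 habsz)
        rw [Gfun, this]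
        simp only [sub_self, mul_zero, zero_div]
        positivity
  exact le_trans (hz1max hz0K) hbound

lemma main_bound (f : ℂ → ℂ) (hf : Differentiable ℂ f)
    (h : ∀ z : ℂ, ‖f z‖ ≤ 1 → ‖deriv f z‖ ≤ 2)
    {z0 : ℂ} (hz0 : 1 < ‖f z0‖) :
    ‖deriv f z0‖ ≤ 2 * ‖f z0‖ := by
  set M : ℝ := ‖f z0‖ with hMdef
  set p : ℝ := ‖deriv f z0‖ with hpdef
  set a : ℝ := ‖z0‖ with hadef
  have hM1 : 1 < M := hz0
  have hMpos : 0 < M := by linarith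
  have ha0 : 0 ≤ a := norm_nonneg z0
  have hL : 0 < Real.log M := Real.log_pos hM1
  have step1 : ∀ R : ℝ, 0 < R → p ≤ 2*M*(Real.log M + R)/R := by
    intro R hR
    have hcR : 0 < Real.log M + R := by linarith
    set C : ℝ := 2*M*(Real.log M + R)/R with hCdef
    have hev : ∀ᶠ r in atTop, p ≤ C * (r^2/(r^2 - a^2)) := by
      filter_upwards [eventually_ge_atTop (max (a+1) R)] with r hrmax
      have hra : a < r := by
        have := le_trans (le_max_left (a+1) R) hrmax; linarith
      have hrR : R ≤ r := le_trans (le_max_right _ _) hrmax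
      have hr : 0 < r := by linarith
      have hG := key_global f hf h hR hz0 hra hrR
      have hden : (0:ℝ) < M * (Real.log M + R) * (2*r) := by positivity
      have hrr : (0:ℝ) < r^2 - a^2 := by nlinarith
      have h1 : p*(r^2 - a^2) ≤ r/R * (M * (Real.log M + R) * (2*r)) := by
        have h2 := mul_le_mul_of_nonneg_right hG (le_of_lt hden)
        rw [Gfun] at h2
        rw [← hMdef, ← hpdef, ← hadef] at h2
        rwa [div_mul_cancel₀ _ (ne_of_gt hden)] at h2
      rw [div_mul_eq_mul_div, le_div_iff₀ hR] at h1
      have h3 : C * (r^2/(r^2 - a^2)) = (2*M*(Real.log M + R)*r^2)/(R*(r^2 - a^2)) := by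
        rw [hCdef]; field_simp
      rw [h3, le_div_iff₀ (by positivity)]
      nlinarith [h1]
    have hlim : Tendsto (fun r : ℝ => C * (r^2/(r^2 - a^2))) atTop (𝓝 (C * 1)) := by
      apply Tendsto.const_mul
      have h1 : Tendsto (fun r : ℝ => r^2 - a^2) atTop atTop := by
        apply tendsto_atTop_add_const_right
        exact tendsto_pow_atTop (two_ne_zero)
      have h2 : Tendsto (fun r : ℝ => a^2/(r^2 - a^2)) atTop (𝓝 0) :=
        Tendsto.div_atTop tendsto_const_nhds h1
      have h3 : (fun r : ℝ => 1 + a^2/(r^2 - a^2)) =ᶠ[atTop] (fun r : ℝ => r^2/(r^2 - a^2)) := by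
        filter_upwards [eventually_gt_atTop (a+1)] with r hrr
        have : (0:ℝ) < r^2 - a^2 := by nlinarith
        field_simp
        ring
      rw [show (1:ℝ) = 1 + 0 by ring]
      exact Tendsto.congr' h3 (tendsto_const_nhds.add h2)
    have := ge_of_tendsto hlim hev
    rw [mul_one] at this
    exact this
  -- R → ∞
  have step2 : Tendsto (fun R : ℝ => 2*M*(Real.log M + R)/R) atTop (𝓝 (2*M)) := by
    have h1 : (fun R : ℝ => 2*M + 2*M*Real.log M/R) =ᶠ[atTop]
        (fun R : ℝ => 2*M*(Real.log M + R)/R) := by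
      filter_upwards [eventually_gt_atTop 0] with R hR
      field_simp
      ring
    have h2 : Tendsto (fun R : ℝ => 2*M + 2*M*Real.log M/R) atTop (𝓝 (2*M + 0)) :=
      tendsto_const_nhds.add (Tendsto.div_atTop tendsto_const_nhds tendsto_id)
    rw [add_zero] at h2
    exact Tendsto.congr' h1 h2
  apply ge_of_tendsto step2
  filter_upwards [eventually_gt_atTop 0] with R hR
  exact step1 R hR


/-- Clunie–Hayman / Pommerenke: if an entire function satisfies `|f'| ≤ 2`
wherever `|f| ≤ 1`, then `|f'| ≤ 2 max{|f|, 1}` everywhere. -/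
theorem entire_deriv_bound (f : ℂ → ℂ) (hf : Differentiable ℂ f)
    (h : ∀ z : ℂ, ‖f z‖ ≤ 1 → ‖deriv f z‖ ≤ 2) :
    ∀ z : ℂ, ‖deriv f z‖ ≤ 2 * max (‖f z‖) 1 := by
  intro z
  by_cases habs : ‖f z‖ ≤ 1
  · rw [max_eq_right habs, mul_one]
    exact h z habs
  · push_neg at habs
    rw [max_eq_left (le_of_lt habs)]
    exact main_bound f hf h habs
end

section
/- Let f₀, …, fₙ be meromorphic (in particular holomorphic) functions on a domain G ⊆ ℂ with no common zeros, and suppose each ratio fᵢ/fⱼ (where defined) has spherical derivative bounded by K. Then the holomorphic curve f = (f₀ : … : fₙ) satisfies f^# ≤ K·√n, where (f^#)² = (∑_{i<j} |fᵢ'fⱼ − fᵢfⱼ'|²)/(∑ⱼ |fⱼ|²)². -/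
open Finset

lemma sum_pairs_aux (n : ℕ) (a : Fin (n + 1) → ℝ) :
    ∑ i : Fin (n + 1), ∑ j : Fin (n + 1),
      (if (i : ℕ) < (j : ℕ) then a i + a j else 0) = n * ∑ j, a j := by
  have e1 : ∀ i j : Fin (n + 1), (if (i : ℕ) < (j : ℕ) then a i + a j else 0)
      = (if (i : ℕ) < (j : ℕ) then a i else 0) + (if (i : ℕ) < (j : ℕ) then a j else 0) := by
    intro i j; split <;> simp
  simp only [e1, Finset.sum_add_distrib]
  have e2 : (∑ i : Fin (n + 1), ∑ j : Fin (n + 1), (if (i : ℕ) < (j : ℕ) then a i else 0))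
      = ∑ i : Fin (n + 1), ∑ j : Fin (n + 1), (if (j : ℕ) < (i : ℕ) then a j else 0) :=
    Finset.sum_comm
  rw [e2, ← Finset.sum_add_distrib]
  have e3 : ∀ i j : Fin (n + 1),
      ((if (j : ℕ) < (i : ℕ) then a j else 0) + if (i : ℕ) < (j : ℕ) then a j else 0)
      = a j - (if i = j then a j else 0) := by
    intro i j
    rcases lt_trichotomy (i : ℕ) (j : ℕ) with h | h | h
    · have hne : i ≠ j := fun hh => absurd h (by simp [hh])
      simp [h, Nat.lt_asymm h, hne]
    · have heq : i = j := Fin.ext h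
      simp [heq]
    · have hne : i ≠ j := fun hh => absurd h (by simp [hh])
      simp [h, Nat.lt_asymm h, hne]
  simp only [← Finset.sum_add_distrib, e3]
  rw [Finset.sum_comm]
  have e4 : ∀ j : Fin (n + 1),
      (∑ i : Fin (n + 1), (a j - if i = j then a j else 0)) = n * a j := by
    intro j
    rw [Finset.sum_sub_distrib, Finset.sum_const, Finset.sum_ite_eq' Finset.univ j fun _ => a j]
    simp [Finset.card_univ]
    ring
  rw [Finset.sum_congr rfl fun j _ => e4 j, ← Finset.mul_sum]

lemma curve_sharp_aux (n : ℕ) (K : ℝ) (hK : 0 ≤ K) (a : Fin (n + 1) → ℝ)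
    (ha : ∀ j, 0 ≤ a j) (w : Fin (n + 1) → Fin (n + 1) → ℝ)
    (hw0 : ∀ i j, 0 ≤ w i j)
    (hw : ∀ i j : Fin (n + 1), (i : ℕ) < (j : ℕ) → w i j ≤ K * (a i + a j)) :
    Real.sqrt (∑ i : Fin (n + 1), ∑ j : Fin (n + 1),
      if (i : ℕ) < (j : ℕ) then w i j ^ 2 else 0) ≤ K * Real.sqrt n * ∑ j, a j := by
  set S := ∑ j, a j with hS
  have hS0 : 0 ≤ S := Finset.sum_nonneg fun j _ => ha j
  have haS : ∀ i j : Fin (n + 1), (i : ℕ) < (j : ℕ) → a i + a j ≤ S := by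
    intro i j hij
    have hne : i ≠ j := fun hh => absurd hij (by simp [hh])
    calc a i + a j = ∑ k ∈ ({i, j} : Finset (Fin (n + 1))), a k := by
          rw [Finset.sum_pair hne]
      _ ≤ S := Finset.sum_le_sum_of_subset_of_nonneg (Finset.subset_univ _)
          fun k _ _ => ha k
  have key : (∑ i : Fin (n + 1), ∑ j : Fin (n + 1),
      if (i : ℕ) < (j : ℕ) then w i j ^ 2 else 0) ≤ K ^ 2 * n * S ^ 2 := by
    calc (∑ i : Fin (n + 1), ∑ j : Fin (n + 1),
        if (i : ℕ) < (j : ℕ) then w i j ^ 2 else 0)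
        ≤ ∑ i : Fin (n + 1), ∑ j : Fin (n + 1),
          if (i : ℕ) < (j : ℕ) then K ^ 2 * S * (a i + a j) else 0 := by
          refine Finset.sum_le_sum fun i _ => Finset.sum_le_sum fun j _ => ?_
          split
          · next hij =>
            have h1 : w i j ^ 2 ≤ (K * (a i + a j)) ^ 2 :=
              pow_le_pow_left₀ (hw0 i j) (hw i j hij) 2
            have h2 : (K * (a i + a j)) ^ 2 ≤ K ^ 2 * S * (a i + a j) := by
              have haa : 0 ≤ a i + a j := add_nonneg (ha i) (ha j)
              have h3 := mul_le_mul_of_nonneg_left (haS i j hij)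
                (mul_nonneg (sq_nonneg K) haa)
              nlinarith
            linarith
          · exact le_refl 0
      _ = K ^ 2 * S * ∑ i : Fin (n + 1), ∑ j : Fin (n + 1),
          (if (i : ℕ) < (j : ℕ) then a i + a j else 0) := by
          simp only [Finset.mul_sum, mul_ite, mul_zero]
      _ = K ^ 2 * S * (n * S) := by rw [sum_pairs_aux]
      _ = K ^ 2 * n * S ^ 2 := by ring
  calc Real.sqrt (∑ i : Fin (n + 1), ∑ j : Fin (n + 1),
      if (i : ℕ) < (j : ℕ) then w i j ^ 2 else 0)
      ≤ Real.sqrt (K ^ 2 * n * S ^ 2) := Real.sqrt_le_sqrt key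
    _ = K * Real.sqrt n * S := by
        rw [Real.sqrt_mul (by positivity), Real.sqrt_mul (by positivity),
          Real.sqrt_sq hK, Real.sqrt_sq hS0]

/-- If all the ratios of the coordinates of a holomorphic curve
`f = (f₀ : … : fₙ)` have spherical derivative at most `K` (equivalently
`|fᵢ'fⱼ - fᵢfⱼ'| ≤ K (|fᵢ|² + |fⱼ|²)`), then the curve satisfies
`f^# ≤ K √n`, where `(f^#)² = (∑_{i<j} |fᵢ'fⱼ - fᵢfⱼ'|²) / (∑ⱼ |fⱼ|²)²`. -/
theorem curve_sharp_le_of_ratios (n : ℕ) (K : ℝ) (hK : 0 ≤ K)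
    (G : Set ℂ) (hG : IsOpen G) (f : Fin (n + 1) → ℂ → ℂ)
    (hol : ∀ j, DifferentiableOn ℂ (f j) G)
    (nocommon : ∀ z ∈ G, ∃ j, f j z ≠ 0)
    (hratio : ∀ i j : Fin (n + 1), (i : ℕ) < (j : ℕ) → ∀ z ∈ G,
      ‖deriv (f i) z * f j z - f i z * deriv (f j) z‖ ≤
        K * (‖f i z‖ ^ 2 + ‖f j z‖ ^ 2)) :
    ∀ z ∈ G,
      Real.sqrt (∑ i : Fin (n + 1), ∑ j : Fin (n + 1),
          if (i : ℕ) < (j : ℕ) then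
            ‖deriv (f i) z * f j z - f i z * deriv (f j) z‖ ^ 2
          else 0) ≤
        K * Real.sqrt n * ∑ j, ‖f j z‖ ^ 2 := by
  intro z hz
  exact curve_sharp_aux n K hK (fun j => ‖f j z‖ ^ 2)
    (fun j => by positivity)
    (fun i j => ‖deriv (f i) z * f j z - f i z * deriv (f j) z‖)
    (fun i j => norm_nonneg _)
    (fun i j hij => hratio i j hij z hz)
end

section
/- Let (V, d_V) and (S, d_S) be metric spaces, W ⊆ V, g : V → S with g|_W surjective, and suppose for each a ∈ W there is a map h_a : B(g(a), δ) → V with h_a(g(a)) = a, g ∘ h_a = id on B(g(a), δ), and h_a L-Lipschitz. Let E be a set, P : S × Δ → S continuous with P(P(w,ζ),−ζ) = w and d_S(P(w,ζ'), P(w,ζ'')) ≤ ‖ζ'−ζ''‖, where Δ is the open ball of radius δ in ℂⁿ. Let φ_s : V^E → Δ (s ∈ E) satisfy ‖φ_s(a)‖ < δ and ‖φ_s(a') − φ_s(a'')‖ ≤ δ·‖a'−a''‖_∞. Assume the set {a ∈ V : d_V(a, W) ≤ ε} is complete and Lδ < ε/(1+ε). Then the map f : V^E → S^E defined by f_s(a)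 = P(g(a_s), φ_s(a)) is surjective. -/
/-- Abstract inverse-function-type lemma (Lemma on free interpolation):
under the local right-invertibility of `g` on `W`, completeness of the
`ε`-neighbourhood of `W`, the quasi-addition `P` and the small perturbations
`φ_s`, the map `a ↦ (s ↦ P (g (a s)) (φ s a))` from `V^E` to `S^E` is
surjective. -/
theorem abstract_interpolation_surjective
    {V S : Type*} [MetricSpace V] [MetricSpace S]
    (n : ℕ) (W : Set V) (g : V → S)
    (δ ε : ℝ) (L : NNReal) (hδ : 0 < δ) (hε : 0 < ε)
    (hsurj : ∀ s : S, ∃ a ∈ W, g a = s)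
    (hinv : ∀ a ∈ W, ∃ h : S → V, h (g a) = a ∧
      (∀ s ∈ Metric.ball (g a) δ, g (h s) = s) ∧
      LipschitzOnWith L h (Metric.ball (g a) δ))
    (E : Type*) (P : S → EuclideanSpace ℂ (Fin n) → S)
    (hPcont : Continuous fun p : S × EuclideanSpace ℂ (Fin n) => P p.1 p.2)
    (hPinv : ∀ w : S, ∀ ζ : EuclideanSpace ℂ (Fin n), ‖ζ‖ < δ →
      P (P w ζ) (-ζ) = w)
    (hPlip : ∀ w : S, ∀ ζ ζ' : EuclideanSpace ℂ (Fin n), ‖ζ‖ < δ → ‖ζ'‖ < δ →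
      dist (P w ζ) (P w ζ') ≤ ‖ζ - ζ'‖)
    (φ : E → (E → V) → EuclideanSpace ℂ (Fin n))
    (hφbd : ∀ s : E, ∀ a : E → V, ‖φ s a‖ < δ)
    (hφlip : ∀ s : E, ∀ a a' : E → V, ∀ C : ℝ,
      (∀ m : E, dist (a m) (a' m) ≤ C) → ‖φ s a - φ s a'‖ ≤ δ * C)
    (hcomplete : IsComplete {a : V | Metric.infDist a W ≤ ε})
    (hcond : (L : ℝ) * δ < ε / (1 + ε)) :
    ∀ b : E → S, ∃ a : E → V, ∀ s : E, P (g (a s)) (φ s a) = b s := by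
  intro b
  classical
  -- base point: for each s pick w s ∈ W with g (w s) = P (b s) 0
  choose w hwW hgw using fun s : E => hsurj (P (b s) 0)
  choose h hh1 hh2 hh3 using fun s : E => hinv (w s) (hwW s)
  set q : ℝ := (L : ℝ) * δ with hqdef
  have hq0 : 0 ≤ q := mul_nonneg L.coe_nonneg hδ.le
  have hεlt : ε / (1 + ε) < 1 := by
    rw [div_lt_one (by linarith)]; linarith
  have hq1 : q < 1 := hcond.trans hεlt
  have h1q : 0 < 1 - q := by linarith
  set c : ℝ := q / (1 - q) with hcdef
  have hc0 : 0 ≤ c := div_nonneg hq0 h1q.le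
  have hcε : c < ε := by
    rw [hcdef, div_lt_iff₀ h1q]
    have h2 : q * (1 + ε) < ε := by
      have := (lt_div_iff₀ (by linarith : (0:ℝ) < 1 + ε)).mp hcond
      linarith
    nlinarith
  have hqc : q * (c + 1) = c := by
    rw [hcdef]; field_simp; ring
  -- the iteration
  let A : ℕ → E → V := fun k =>
    Nat.rec w (fun _ prev s => h s (P (b s) (-(φ s prev)))) k
  have hA0 : A 0 = w := rfl
  have hAsucc : ∀ k s, A (k + 1) s = h s (P (b s) (-(φ s (A k)))) := fun _ _ => rfl
  have memball : ∀ (s : E) (ζ : EuclideanSpace ℂ (Fin n)), ‖ζ‖ < δ →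
      P (b s) (-ζ) ∈ Metric.ball (g (w s)) δ := by
    intro s ζ hζ
    rw [hgw s, Metric.mem_ball]
    calc dist (P (b s) (-ζ)) (P (b s) 0) ≤ ‖-ζ - 0‖ :=
          hPlip _ _ _ (by simpa using hζ) (by simpa using hδ)
      _ = ‖ζ‖ := by simp
      _ < δ := hζ
  have hball0 : ∀ s, P (b s) 0 ∈ Metric.ball (g (w s)) δ := by
    intro s
    simpa using memball s 0 (by simpa using hδ)
  have gA : ∀ k s, g (A (k + 1) s) = P (b s) (-(φ s (A k))) := fun k s =>
    hh2 s _ (memball s _ (hφbd s _))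
  have hw_eq : ∀ s, w s = h s (P (b s) 0) := by
    intro s; rw [← hgw s, hh1 s]
  -- successive distances
  have key : ∀ k s, dist (A (k + 1) s) (A k s) ≤ q ^ (k + 1) := by
    intro k
    induction k with
    | zero =>
      intro s
      have := (hh3 s).dist_le_mul _ (memball s _ (hφbd s (A 0))) _ (hball0 s)
      calc dist (A (0 + 1) s) (A 0 s)
          = dist (h s (P (b s) (-(φ s (A 0))))) (h s (P (b s) 0)) := by
            rw [hAsucc, hA0, hw_eq s]
        _ ≤ L * dist (P (b s) (-(φ s (A 0)))) (P (b s) 0) := this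
        _ ≤ L * ‖-(φ s (A 0)) - 0‖ := by
            refine mul_le_mul_of_nonneg_left ?_ L.coe_nonneg
            exact hPlip _ _ _ (by simpa using hφbd s (A 0)) (by simpa using hδ)
        _ = L * ‖φ s (A 0)‖ := by simp
        _ ≤ L * δ := mul_le_mul_of_nonneg_left (hφbd s (A 0)).le L.coe_nonneg
        _ = q ^ (0 + 1) := by rw [hqdef]; ring
    | succ k ih =>
      intro s
      have hφd : ‖φ s (A (k + 1)) - φ s (A k)‖ ≤ δ * q ^ (k + 1) :=
        hφlip s (A (k + 1)) (A k) (q ^ (k + 1)) (fun m => ih m)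
      calc dist (A (k + 1 + 1) s) (A (k + 1) s)
          = dist (h s (P (b s) (-(φ s (A (k + 1)))))) (h s (P (b s) (-(φ s (A k))))) := by
            rw [hAsucc (k + 1) s, hAsucc k s]
        _ ≤ L * dist (P (b s) (-(φ s (A (k + 1))))) (P (b s) (-(φ s (A k)))) :=
            (hh3 s).dist_le_mul _ (memball s _ (hφbd s _)) _ (memball s _ (hφbd s _))
        _ ≤ L * ‖-(φ s (A (k + 1))) - -(φ s (A k))‖ := by
            refine mul_le_mul_of_nonneg_left ?_ L.coe_nonneg
            exact hPlip _ _ _ (by simpa using hφbd s _) (by simpa using hφbd s _)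
        _ = L * ‖φ s (A (k + 1)) - φ s (A k)‖ := by
            rw [neg_sub_neg, norm_sub_rev]
        _ ≤ L * (δ * q ^ (k + 1)) := mul_le_mul_of_nonneg_left hφd L.coe_nonneg
        _ = q ^ (k + 1 + 1) := by rw [hqdef]; ring
  -- distance over several steps
  have dsteps : ∀ l k s, dist (A (k + l) s) (A k s) ≤ q ^ k * c := by
    intro l
    induction l with
    | zero =>
      intro k s
      simp only [Nat.add_zero, dist_self]
      positivity
    | succ l ih =>
      intro k s
      have h1 : dist (A (k + (l + 1)) s) (A (k + 1) s) ≤ q ^ (k + 1) * c := by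
        have := ih (k + 1) s
        rwa [show k + 1 + l = k + (l + 1) by ring] at this
      calc dist (A (k + (l + 1)) s) (A k s)
          ≤ dist (A (k + (l + 1)) s) (A (k + 1) s) + dist (A (k + 1) s) (A k s) :=
            dist_triangle _ _ _
        _ ≤ q ^ (k + 1) * c + q ^ (k + 1) := add_le_add h1 (key k s)
        _ = q ^ k * (q * (c + 1)) := by ring
        _ = q ^ k * c := by rw [hqc]
  -- each coordinate sequence is Cauchy and stays in the complete set
  have hmem : ∀ k s, A k s ∈ {a : V | Metric.infDist a W ≤ ε} := by
    intro k s
    have h1 : Metric.infDist (A k s) W ≤ dist (A k s) (w s) :=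
      Metric.infDist_le_dist_of_mem (hwW s)
    have h2 : dist (A k s) (w s) ≤ c := by
      have := dsteps k 0 s
      simpa [hA0] using this
    exact le_trans h1 (le_trans h2 hcε.le)
  have hlim : ∀ s, ∃ v ∈ {a : V | Metric.infDist a W ≤ ε},
      Filter.Tendsto (fun k => A k s) Filter.atTop (nhds v) := by
    intro s
    refine cauchySeq_tendsto_of_isComplete hcomplete (fun k => hmem k s) ?_
    refine cauchySeq_of_le_geometric q q hq1 (fun k => ?_)
    calc dist (A k s) (A (k + 1) s) = dist (A (k + 1) s) (A k s) := dist_comm _ _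
      _ ≤ q ^ (k + 1) := key k s
      _ = q * q ^ k := by ring
  choose a hamem hatend using hlim
  -- distance to the limit
  have dlim : ∀ k s, dist (A k s) (a s) ≤ q ^ k * c := by
    intro k s
    have ht : Filter.Tendsto (fun l => dist (A k s) (A (l + k) s)) Filter.atTop
        (nhds (dist (A k s) (a s))) :=
      Filter.Tendsto.dist tendsto_const_nhds
        ((hatend s).comp (Filter.tendsto_add_atTop_nat k))
    refine le_of_tendsto ht (Filter.Eventually.of_forall fun l => ?_)
    calc dist (A k s) (A (l + k) s) = dist (A (k + l) s) (A k s) := by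
          rw [dist_comm, Nat.add_comm l k]
      _ ≤ q ^ k * c := dsteps l k s
  refine ⟨a, fun s => ?_⟩
  -- the limit satisfies the fixed point equation
  have hta : P (b s) (-(φ s a)) ∈ Metric.ball (g (w s)) δ := memball s _ (hφbd s a)
  have hfix : a s = h s (P (b s) (-(φ s a))) := by
    have hbd : ∀ k : ℕ, dist (a s) (h s (P (b s) (-(φ s a)))) ≤ 2 * (q ^ (k + 1) * c) := by
      intro k
      have h1 : dist (a s) (A (k + 1) s) ≤ q ^ (k + 1) * c := by
        rw [dist_comm]; exact dlim (k + 1) s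
      have hφd : ‖φ s (A k) - φ s a‖ ≤ δ * (q ^ k * c) :=
        hφlip s (A k) a (q ^ k * c) (fun m => dlim k m)
      have h2 : dist (A (k + 1) s) (h s (P (b s) (-(φ s a)))) ≤ q ^ (k + 1) * c := by
        calc dist (A (k + 1) s) (h s (P (b s) (-(φ s a))))
            = dist (h s (P (b s) (-(φ s (A k))))) (h s (P (b s) (-(φ s a)))) := by
              rw [hAsucc k s]
          _ ≤ L * dist (P (b s) (-(φ s (A k)))) (P (b s) (-(φ s a))) :=
              (hh3 s).dist_le_mul _ (memball s _ (hφbd s _)) _ hta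
          _ ≤ L * ‖-(φ s (A k)) - -(φ s a)‖ := by
              refine mul_le_mul_of_nonneg_left ?_ L.coe_nonneg
              exact hPlip _ _ _ (by simpa using hφbd s _) (by simpa using hφbd s a)
          _ = L * ‖φ s (A k) - φ s a‖ := by rw [neg_sub_neg, norm_sub_rev]
          _ ≤ L * (δ * (q ^ k * c)) := mul_le_mul_of_nonneg_left hφd L.coe_nonneg
          _ = q ^ (k + 1) * c := by rw [hqdef]; ring
      calc dist (a s) (h s (P (b s) (-(φ s a))))
          ≤ dist (a s) (A (k + 1) s) + dist (A (k + 1) s) (h s (P (b s) (-(φ s a)))) :=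
            dist_triangle _ _ _
        _ ≤ 2 * (q ^ (k + 1) * c) := by linarith
    have hz : Filter.Tendsto (fun k : ℕ => 2 * (q ^ (k + 1) * c)) Filter.atTop (nhds 0) := by
      have hpow : Filter.Tendsto (fun k : ℕ => q ^ (k + 1)) Filter.atTop (nhds 0) :=
        (tendsto_pow_atTop_nhds_zero_of_lt_one hq0 hq1).comp
          (Filter.tendsto_add_atTop_nat 1)
      simpa using (hpow.mul_const c).const_mul 2
    have : dist (a s) (h s (P (b s) (-(φ s a)))) ≤ 0 :=
      ge_of_tendsto hz (Filter.Eventually.of_forall hbd)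
    exact eq_of_dist_eq_zero (le_antisymm this dist_nonneg)
  have hg : g (a s) = P (b s) (-(φ s a)) := by
    rw [hfix]; exact hh2 s _ hta
  rw [hg]
  have := hPinv (b s) (-(φ s a)) (by simpa using hφbd s a)
  simpa using this
end
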